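/- If (α, β) ∈ ℝ² satisfies β² − α² < (k/(2c)) d_θ α ≤ α² + β² (the region 𝒱_S; note that this forces α ≠ 0), then Q_S^θ(α, β) = c (α² + β²)²/α² − k d_θ (α² + β²)/α + 2 c₁ k (a_θ α − b_θ β) + c k² + ē_S, and the infimum defining Q_S^θ(α, β) is attained at γ = β²/α. -/

import Mathlib

set_option maxHeartbeats 1000000 in
/-- Splay-bend-case context: `c = c₁ + c₂`, `aθ = cos 2θ`, `bθ = sin 2θ`,
`dθ = c₁ aθ − c − c₂`,
`fS α β γ = c(α² + 2β² + γ²) + 2c|αγ − β²| − k dθ (α + γ) + 2c₁ k (aθ α − bθ β) + c k² + ē_S`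
and `Q α β = ⨅ γ, fS α β γ`. -/
theorem stmt11 (c₁ c₂ k θ eS : ℝ) (hc₁ : 0 < c₁) (hc₂ : 0 < c₂)
    (hθ : 0 ≤ θ ∧ θ < Real.pi) (heS : 0 ≤ eS)
    (c aθ bθ dθ : ℝ) (hc : c = c₁ + c₂)
    (haθ : aθ = Real.cos (2 * θ)) (hbθ : bθ = Real.sin (2 * θ))
    (hdθ : dθ = c₁ * aθ - c - c₂)
    (fS : ℝ → ℝ → ℝ → ℝ)
    (hfS : ∀ α β γ : ℝ, fS α β γ =
      c * (α ^ 2 + 2 * β ^ 2 + γ ^ 2) + 2 * c * |α * γ - β ^ 2|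
        - k * dθ * (α + γ) + 2 * c₁ * k * (aθ * α - bθ * β) + c * k ^ 2 + eS)
    (Q : ℝ → ℝ → ℝ) (hQ : ∀ α β : ℝ, Q α β = ⨅ γ : ℝ, fS α β γ)
    (α β : ℝ) (hreg₁ : β ^ 2 - α ^ 2 < (k / (2 * c)) * dθ * α)
    (hreg₂ : (k / (2 * c)) * dθ * α ≤ α ^ 2 + β ^ 2) :
    α ≠ 0 ∧
    Q α β = c * (α ^ 2 + β ^ 2) ^ 2 / α ^ 2 - k * dθ * (α ^ 2 + β ^ 2) / α
      + 2 * c₁ * k * (aθ * α - bθ * β) + c * k ^ 2 + eS ∧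
    fS α β (β ^ 2 / α) = Q α β := by
  have hcpos : 0 < c := by rw [hc]; linarith
  have h2c : (0:ℝ) < 2 * c := by linarith
  have hα : α ≠ 0 := by
    intro h
    rw [h] at hreg₁
    nlinarith [sq_nonneg β]
  have hα2 : 0 < α ^ 2 := by positivity
  have hk2c : k / (2 * c) * (2 * c) = k := div_mul_cancel₀ k (ne_of_gt h2c)
  have hclear : 2 * c * (k / (2 * c) * dθ * α) = k * dθ * α := by
    field_simp
  have hr1 : 2 * c * (β ^ 2 - α ^ 2) < k * dθ * α := by
    have h := mul_lt_mul_of_pos_left hreg₁ h2c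
    linarith [h, hclear]
  have hr2 : k * dθ * α ≤ 2 * c * (α ^ 2 + β ^ 2) := by
    have h := mul_le_mul_of_nonneg_left hreg₂ (le_of_lt h2c)
    linarith [h, hclear]
  set γ0 : ℝ := β ^ 2 / α with hγ0
  have hαγ0 : α * γ0 = β ^ 2 := by rw [hγ0]; field_simp
  -- key inequality: γ0 is the minimizer
  have key : ∀ γ : ℝ, fS α β γ0 ≤ fS α β γ := by
    intro γ
    rw [hfS, hfS]
    have h0 : |α * γ0 - β ^ 2| = 0 := by rw [hαγ0]; simp
    rw [h0]
    set u : ℝ := α * γ - β ^ 2 with hu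
    have hA1 : u ≤ |u| := le_abs_self u
    have hA2 : -u ≤ |u| := neg_le_abs u
    have h1 : 0 ≤ c * u ^ 2 + (2 * c * β ^ 2 - k * dθ * α) * u + 2 * c * α ^ 2 * |u| := by
      rcases le_or_gt 0 u with hupos | huneg
      · nlinarith [mul_le_mul_of_nonneg_left hA1 (le_of_lt (by positivity : (0:ℝ) < 2 * c * α ^ 2)),
          mul_nonneg (le_of_lt hcpos) (sq_nonneg u),
          mul_le_mul_of_nonneg_right hr2 hupos]
      · nlinarith [mul_le_mul_of_nonneg_left hA2 (le_of_lt (by positivity : (0:ℝ) < 2 * c * α ^ 2)),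
          mul_nonneg (le_of_lt hcpos) (sq_nonneg u),
          mul_le_mul_of_nonpos_right hr1.le (le_of_lt huneg)]
    have h2 : (c * γ ^ 2 + 2 * c * |u| - k * dθ * γ - (c * γ0 ^ 2 - k * dθ * γ0)) * α ^ 2
        = c * u ^ 2 + (2 * c * β ^ 2 - k * dθ * α) * u + 2 * c * α ^ 2 * |u| := by
      rw [hu, hγ0]
      field_simp
      ring
    nlinarith [h1, h2, hα2]
  -- value at γ0
  have hval : fS α β γ0 = c * (α ^ 2 + β ^ 2) ^ 2 / α ^ 2 - k * dθ * (α ^ 2 + β ^ 2) / α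
      + 2 * c₁ * k * (aθ * α - bθ * β) + c * k ^ 2 + eS := by
    rw [hfS]
    have h0 : |α * γ0 - β ^ 2| = 0 := by rw [hαγ0]; simp
    rw [h0, hγ0]
    field_simp
    ring
  have hQval : Q α β = fS α β γ0 := by
    rw [hQ]
    refine le_antisymm (ciInf_le ⟨fS α β γ0, ?_⟩ γ0) (le_ciInf key)
    rintro x ⟨γ, rfl⟩
    exact key γ
  exact ⟨hα, by rw [hQval, hval], by rw [hQval]⟩
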